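/- For a càdlàg function f : [a,b] → ℝ and c > 0, the function s ↦ UTV^c(f,[a,s]) − DTV^c(f,[a,s]) is càdlàg, and every point of discontinuity of this function is a point of discontinuity of f. -/

import Mathlib

open Set Filter

/-- A finite partition `t 0 < t 1 < ... < t n` of points in `[a, b]`. -/
def IsPart (a b : ℝ) (n : ℕ) (t : ℕ → ℝ) : Prop :=
  a ≤ t 0 ∧ t n ≤ b ∧ ∀ i < n, t i < t (i + 1)

/-- Total variation of `f` on `[a, b]`. -/
noncomputable def TVar {E : Type*} [PseudoMetricSpace E] (f : ℝ → E) (a b : ℝ) : ENNReal :=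
  ⨆ (n : ℕ) (t : ℕ → ℝ) (_ : IsPart a b n t),
    ∑ i ∈ Finset.range n, ENNReal.ofReal (dist (f (t (i + 1))) (f (t i)))

/-- Truncated variation of `f` at level `c` on `[a, b]`. -/
noncomputable def TVc {E : Type*} [PseudoMetricSpace E] (f : ℝ → E) (c a b : ℝ) : ENNReal :=
  ⨆ (n : ℕ) (t : ℕ → ℝ) (_ : IsPart a b n t),
    ∑ i ∈ Finset.range n, ENNReal.ofReal (dist (f (t (i + 1))) (f (t i)) - c)

/-- Upward truncated variation. -/
noncomputable def UTVc (f : ℝ → ℝ) (c a b : ℝ) : ENNReal :=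
  ⨆ (n : ℕ) (t : ℕ → ℝ) (_ : IsPart a b n t),
    ∑ i ∈ Finset.range n, ENNReal.ofReal (f (t (i + 1)) - f (t i) - c)

/-- Downward truncated variation. -/
noncomputable def DTVc (f : ℝ → ℝ) (c a b : ℝ) : ENNReal :=
  ⨆ (n : ℕ) (t : ℕ → ℝ) (_ : IsPart a b n t),
    ∑ i ∈ Finset.range n, ENNReal.ofReal (f (t i) - f (t (i + 1)) - c)

/-- `f` is càdlàg on `[a, b]`: right-continuous on `[a, b)`, with left limits on `(a, b]`. -/
def Cadlag {E : Type*} [TopologicalSpace E] (f : ℝ → E) (a b : ℝ) : Prop :=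
  (∀ t ∈ Set.Ico a b, Tendsto f (nhdsWithin t (Set.Ioi t)) (nhds (f t))) ∧
  (∀ t ∈ Set.Ioc a b, ∃ l, Tendsto f (nhdsWithin t (Set.Iio t)) (nhds l))


lemma part_mono {n : ℕ} {t : ℕ → ℝ} (h : ∀ i < n, t i < t (i + 1)) :
    ∀ i j, i ≤ j → j ≤ n → t i ≤ t j := by
  intro i j hij hjn
  induction j with
  | zero => simp_all
  | succ k ih =>
    rcases Nat.eq_or_lt_of_le hij with rfl | hlt
    · exact le_rfl
    · exact (ih (Nat.lt_succ_iff.mp hlt) (le_trans (Nat.le_succ k) hjn)).trans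
        (h k (Nat.lt_of_succ_le hjn)).le

lemma part_mem {a b : ℝ} {n : ℕ} {t : ℕ → ℝ} (h : IsPart a b n t) {i : ℕ} (hi : i ≤ n) :
    a ≤ t i ∧ t i ≤ b :=
  ⟨h.1.trans (part_mono h.2.2 0 i (Nat.zero_le _) hi),
   (part_mono h.2.2 i n hi le_rfl).trans h.2.1⟩

lemma sum_le_utv {f : ℝ → ℝ} {c a b : ℝ} {n : ℕ} {t : ℕ → ℝ} (h : IsPart a b n t) :
    ∑ i ∈ Finset.range n, ENNReal.ofReal (f (t (i + 1)) - f (t i) - c) ≤ UTVc f c a b := by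
  exact le_iSup_of_le n (le_iSup_of_le t (le_iSup_of_le h le_rfl))

lemma utv_mono (f : ℝ → ℝ) (c a : ℝ) {s t : ℝ} (hst : s ≤ t) : UTVc f c a s ≤ UTVc f c a t := by
  refine iSup_le fun n => iSup_le fun u => iSup_le fun h => ?_
  exact sum_le_utv ⟨h.1, h.2.1.trans hst, h.2.2⟩

lemma utv_zero {f : ℝ → ℝ} {c s t : ℝ}
    (h : ∀ u v, s ≤ u → u ≤ v → v ≤ t → f v - f u ≤ c) : UTVc f c s t = 0 := by
  refine le_antisymm ?_ zero_le
  refine iSup_le fun n => iSup_le fun u => iSup_le fun hp => le_of_eq ?_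
  refine Finset.sum_eq_zero fun i hi => ?_
  rw [Finset.mem_range] at hi
  have h1 := part_mem hp (Nat.le_of_lt hi)
  have h2 := part_mem hp (Nat.succ_le_of_lt hi)
  have := h (u i) (u (i+1)) h1.1 (hp.2.2 i hi).le h2.2
  simp [ENNReal.ofReal_eq_zero, sub_nonpos.mpr this]

lemma utv_split {f : ℝ → ℝ} {c a s t e : ℝ} (hc : 0 ≤ c) (hst : s ≤ t) (he : 0 ≤ e)
    (hbd : ∀ u, s ≤ u → u ≤ t → f u - f s ≤ e) :
    UTVc f c a t ≤ UTVc f c a s + UTVc f c s t + ENNReal.ofReal e := by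
  refine iSup_le fun n => iSup_le fun u => iSup_le fun hp => ?_
  by_cases hn : u n ≤ s
  · exact le_add_of_le_of_nonneg
      (le_add_of_le_of_nonneg (sum_le_utv ⟨hp.1, hn, hp.2.2⟩) zero_le) zero_le
  by_cases h0 : s < u 0
  · refine le_add_of_le_of_nonneg ?_ zero_le
    exact (sum_le_utv ⟨h0.le, hp.2.1, hp.2.2⟩).trans le_add_self
  push_neg at hn h0
  have hex : ∃ i, s < u i := ⟨n, hn⟩
  have hk' : s < u (Nat.find hex) := Nat.find_spec hex
  have hk'n : Nat.find hex ≤ n := Nat.find_le hn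
  have hk'pos : 0 < Nat.find hex := by
    rcases Nat.eq_zero_or_pos (Nat.find hex) with h | h
    · exact absurd (h ▸ hk') (not_lt.mpr h0)
    · exact h
  obtain ⟨k, hkk⟩ : ∃ k, Nat.find hex = k + 1 :=
    ⟨Nat.find hex - 1, (Nat.succ_pred_eq_of_pos hk'pos).symm⟩
  rw [hkk] at hk' hk'n
  have huk : u k ≤ s := not_lt.mp (Nat.find_min hex (hkk ▸ Nat.lt_succ_self k))
  have hkn : k < n := lt_of_lt_of_le (Nat.lt_succ_self k) hk'n
  set T : ℕ → ENNReal := fun i => ENNReal.ofReal (f (u (i + 1)) - f (u i) - c) with hT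
  obtain ⟨m, hm⟩ : ∃ m, n = (k + 1) + m := ⟨n - (k+1), by omega⟩
  have hsum : ∑ i ∈ Finset.range n, T i
      = (∑ i ∈ Finset.range k, T i + T k) + ∑ j ∈ Finset.range m, T (k + 1 + j) := by
    rw [hm, Finset.sum_range_add, Finset.sum_range_succ]
  have hA : ∑ i ∈ Finset.range k, T i + ENNReal.ofReal (f s - f (u k) - c) ≤ UTVc f c a s := by
    rcases eq_or_lt_of_le huk with heq | hlt
    · have h1 : ENNReal.ofReal (f s - f (u k) - c) = 0 := by
        rw [heq]; simp [ENNReal.ofReal_eq_zero]; linarith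
      rw [h1, add_zero]
      exact sum_le_utv ⟨hp.1, huk, fun i hi => hp.2.2 i (hi.trans hkn)⟩
    · set w : ℕ → ℝ := fun i => if i ≤ k then u i else s with hw
      have hpw : IsPart a s (k + 1) w := by
        refine ⟨by simpa [hw] using hp.1, by simp [hw], fun i hi => ?_⟩
        rcases Nat.lt_or_ge i k with h | h
        · have : i + 1 ≤ k := h
          simp only [hw, if_pos h.le, if_pos this]
          exact hp.2.2 i (h.trans hkn)
        · have hik : i = k := by omega
          subst hik
          simp only [hw, if_pos le_rfl, if_neg (by omega : ¬ i + 1 ≤ i)]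
          exact hlt
      calc ∑ i ∈ Finset.range k, T i + ENNReal.ofReal (f s - f (u k) - c)
          = ∑ i ∈ Finset.range (k+1), ENNReal.ofReal (f (w (i + 1)) - f (w i) - c) := by
            rw [Finset.sum_range_succ]
            congr 1
            · refine Finset.sum_congr rfl fun i hi => ?_
              rw [Finset.mem_range] at hi
              simp only [hw, if_pos hi.le, if_pos (Nat.succ_le_of_lt hi), hT]
            · simp only [hw, if_pos le_rfl, if_neg (by omega : ¬ k + 1 ≤ k)]
        _ ≤ UTVc f c a s := sum_le_utv hpw
  have hB : T k ≤ ENNReal.ofReal (f s - f (u k) - c) + ENNReal.ofReal e := by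
    have h1 : f (u (k+1)) - f s ≤ e := hbd (u (k+1)) hk'.le (part_mem hp hk'n).2
    calc T k ≤ ENNReal.ofReal ((f s - f (u k) - c) + e) :=
          ENNReal.ofReal_le_ofReal (by linarith)
      _ ≤ _ := ENNReal.ofReal_add_le
  have hC : ∑ j ∈ Finset.range m, T (k + 1 + j) ≤ UTVc f c s t := by
    have hpv : IsPart s t m (fun j => u (k + 1 + j)) := by
      refine ⟨by simpa using hk'.le, by have h2 := hp.2.1; rw [hm] at h2; exact h2, fun j hj => ?_⟩
      have : k + 1 + j < n := by omega
      exact hp.2.2 _ this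
    exact sum_le_utv hpv
  calc ∑ i ∈ Finset.range n, T i
      = (∑ i ∈ Finset.range k, T i + T k) + ∑ j ∈ Finset.range m, T (k + 1 + j) := hsum
    _ ≤ (∑ i ∈ Finset.range k, T i + (ENNReal.ofReal (f s - f (u k) - c) + ENNReal.ofReal e))
        + UTVc f c s t := add_le_add (add_le_add le_rfl hB) hC
    _ = (∑ i ∈ Finset.range k, T i + ENNReal.ofReal (f s - f (u k) - c))
        + UTVc f c s t + ENNReal.ofReal e := by ring
    _ ≤ UTVc f c a s + UTVc f c s t + ENNReal.ofReal e := by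
        exact add_le_add (add_le_add hA le_rfl) le_rfl

lemma utv_degenerate {f : ℝ → ℝ} {c a t : ℝ} (h : t ≤ a) : UTVc f c a t = 0 := by
  refine le_antisymm (iSup_le fun n => iSup_le fun u => iSup_le fun hp => ?_) zero_le
  match n with
  | 0 => simp
  | Nat.succ m =>
    exfalso
    have h1 : u 0 ≤ u m := part_mono hp.2.2 0 m (Nat.zero_le _) (Nat.le_succ m)
    have h2 := hp.2.2 m (Nat.lt_succ_self m)
    have h3 := hp.1
    have h4 := hp.2.1
    linarith

lemma utv_le_of_small {f : ℝ → ℝ} {c s t K : ℝ} (hK : 0 ≤ K)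
    (hsmall : ∀ u v, s ≤ u → u ≤ v → v < t → f v - f u ≤ c)
    (hend : ∀ u, s ≤ u → u < t → f t - f u - c ≤ K) :
    UTVc f c s t ≤ ENNReal.ofReal K := by
  refine iSup_le fun n => iSup_le fun u => iSup_le fun hp => ?_
  match n with
  | 0 => simp
  | Nat.succ m =>
    rw [Finset.sum_range_succ]
    have hz : ∑ i ∈ Finset.range m, ENNReal.ofReal (f (u (i + 1)) - f (u i) - c) = 0 := by
      refine Finset.sum_eq_zero fun i hi => ?_
      rw [Finset.mem_range] at hi
      have h1 : u (i+1) ≤ u m := part_mono hp.2.2 (i+1) m hi (Nat.le_succ m)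
      have h2 : u m < u (m+1) := hp.2.2 m (Nat.lt_succ_self m)
      have h3 : u (i+1) < t := lt_of_le_of_lt h1 (lt_of_lt_of_le h2 hp.2.1)
      have h4 := hsmall (u i) (u (i+1)) (part_mem hp (Nat.le_of_lt (Nat.lt_succ_of_lt hi))).1
        (hp.2.2 i (by omega)).le h3
      simp [ENNReal.ofReal_eq_zero]; linarith
    rw [hz, zero_add]
    have hsm : s ≤ u m := (part_mem hp (Nat.le_succ m)).1
    rcases lt_or_eq_of_le hp.2.1 with hlt | heq
    · have := hsmall (u m) (u (m+1)) hsm (hp.2.2 m (Nat.lt_succ_self m)).le hlt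
      calc ENNReal.ofReal (f (u (m + 1)) - f (u m) - c) = 0 := by
            simp [ENNReal.ofReal_eq_zero]; linarith
        _ ≤ _ := zero_le
    · rw [heq]
      exact ENNReal.ofReal_le_ofReal
        (hend (u m) hsm (heq ▸ hp.2.2 m (Nat.lt_succ_self m)))

lemma utv_fin {f : ℝ → ℝ} {c a b : ℝ} (hab : a ≤ b) (hc : 0 < c)
    (hrt : ∀ t ∈ Ico a b, Tendsto f (nhdsWithin t (Ioi t)) (nhds (f t)))
    (hlt : ∀ t ∈ Ioc a b, ∃ l, Tendsto f (nhdsWithin t (Iio t)) (nhds l)) :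
    UTVc f c a b ≠ ⊤ := by
  set S : Set ℝ := {t | t ∈ Icc a b ∧ UTVc f c a t ≠ ⊤} with hS
  have haS : a ∈ S := ⟨⟨le_rfl, hab⟩, by rw [utv_degenerate le_rfl]; exact ENNReal.zero_ne_top⟩
  have hbdd : BddAbove S := ⟨b, fun t ht => ht.1.2⟩
  set m := sSup S with hm
  have ham : a ≤ m := le_csSup hbdd haS
  have hmb : m ≤ b := csSup_le ⟨a, haS⟩ fun t ht => ht.1.2
  have hUm : UTVc f c a m ≠ ⊤ := by
    rcases eq_or_lt_of_le ham with heq | hlta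
    · rw [← heq, utv_degenerate le_rfl]; exact ENNReal.zero_ne_top
    · obtain ⟨l, hl⟩ := hlt m ⟨hlta, hmb⟩
      rw [Metric.tendsto_nhdsWithin_nhds] at hl
      obtain ⟨δ, hδ, hball⟩ := hl (c/4) (by linarith)
      obtain ⟨s, hsS, hs⟩ := exists_lt_of_lt_csSup ⟨a, haS⟩
        (show max (m - δ) a < m from max_lt (by linarith) hlta)
      have hsm : s ≤ m := le_csSup hbdd hsS
      rcases eq_or_lt_of_le hsm with heq | hslt
      · exact heq ▸ hsS.2
      have hnear : ∀ u, s ≤ u → u < m → |f u - l| < c/4 := by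
        intro u hu1 hu2
        have : dist u m < δ := by
          rw [Real.dist_eq, abs_of_nonpos (by linarith)]
          have h5 : m - δ < s := lt_of_le_of_lt (le_max_left (m - δ) a) hs
          linarith
        have := hball hu2 this
        rwa [Real.dist_eq] at this
      set K := |f m - l| + c with hK
      have hsplit := utv_split (f := f) (a := a) hc.le hslt.le
        (show (0:ℝ) ≤ K from by positivity)
        (fun u hu1 hu2 => by
          rcases eq_or_lt_of_le hu2 with heq | hu3
          · have h1 := hnear s le_rfl hslt
            have h2 : |f m - l| ≤ |f m - l| := le_rfl
            rw [heq]
            have : f m - l ≤ |f m - l| := le_abs_self _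
            have h4 : -(c/4) < f s - l := by have := abs_lt.mp h1; linarith [(abs_lt.mp h1).1]
            linarith
          · have h1 := hnear u hu1 hu3
            have h2 := hnear s le_rfl hslt
            have := (abs_lt.mp h1).2
            have := (abs_lt.mp h2).1
            linarith [abs_nonneg (f m - l)])
      have hmid : UTVc f c s m ≤ ENNReal.ofReal K := by
        refine utv_le_of_small (by positivity) ?_ ?_
        · intro u v hu huv hv
          have h1 := hnear u hu (lt_of_le_of_lt huv hv)
          have h2 := hnear v (hu.trans huv) hv
          have := (abs_lt.mp h1).1
          have := (abs_lt.mp h2).2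
          linarith
        · intro u hu1 hu2
          have h1 := hnear u hu1 hu2
          have : f m - l ≤ |f m - l| := le_abs_self _
          have := (abs_lt.mp h1).1
          linarith
      refine ne_top_of_le_ne_top ?_ (hsplit.trans (add_le_add (add_le_add le_rfl hmid) le_rfl))
      exact ENNReal.add_ne_top.mpr ⟨ENNReal.add_ne_top.mpr ⟨hsS.2, ENNReal.ofReal_ne_top⟩,
        ENNReal.ofReal_ne_top⟩
  rcases eq_or_lt_of_le hmb with heq | hltb
  · exact heq ▸ hUm
  · exfalso
    have hrtm := hrt m ⟨ham, hltb⟩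
    rw [Metric.tendsto_nhdsWithin_nhds] at hrtm
    obtain ⟨δ, hδ, hball⟩ := hrtm (c/4) (by linarith)
    set t0 := min (m + δ/2) b with ht0
    have hmt0 : m < t0 := lt_min (by linarith) hltb
    have ht0b : t0 ≤ b := min_le_right _ _
    have hnear : ∀ u, m < u → u ≤ t0 → |f u - f m| < c/4 := by
      intro u h1 h2
      have : dist u m < δ := by
        rw [Real.dist_eq, abs_of_nonneg (by linarith)]
        have : u ≤ m + δ/2 := h2.trans (min_le_left _ _)
        linarith
      have := hball h1 this
      rwa [Real.dist_eq] at this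
    have hz : UTVc f c m t0 = 0 := by
      refine utv_zero fun u v hu huv hv => ?_
      rcases eq_or_lt_of_le hu with heq | hu2
      · rcases eq_or_lt_of_le (heq ▸ huv : m ≤ v) with heq2 | hv2
        · rw [← heq, ← heq2]; linarith
        · have := (abs_lt.mp (hnear v hv2 hv)).2; rw [← heq]; linarith
      · have h1 := (abs_lt.mp (hnear u hu2 (huv.trans hv))).1
        rcases eq_or_lt_of_le huv with heq2 | hv2
        · rw [← heq2]; linarith
        · have := (abs_lt.mp (hnear v (hu2.trans hv2) hv)).2; linarith
    have hsplit := utv_split (f := f) (a := a) hc.le hmt0.le (le_of_lt (show (0:ℝ) < c/4 by linarith))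
      (fun u hu1 hu2 => by
        rcases eq_or_lt_of_le hu1 with heq | hu3
        · rw [← heq]; simp; linarith
        · have := (abs_lt.mp (hnear u hu3 hu2)).2; linarith)
    rw [hz, add_zero] at hsplit
    have ht0S : t0 ∈ S := by
      refine ⟨⟨ham.trans hmt0.le, ht0b⟩, ne_top_of_le_ne_top ?_ hsplit⟩
      exact ENNReal.add_ne_top.mpr ⟨hUm, ENNReal.ofReal_ne_top⟩
    exact absurd (le_csSup hbdd ht0S) (not_le.mpr hmt0)

lemma toReal_squeeze {A B : ENNReal} {e : ℝ} (hB : B ≠ ⊤) (h1 : A ≤ B)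
    (h2 : B ≤ A + ENNReal.ofReal e) (he : 0 ≤ e) : |B.toReal - A.toReal| ≤ e := by
  have hA : A ≠ ⊤ := ne_top_of_le_ne_top hB h1
  have h3 : B.toReal ≤ A.toReal + e := by
    have h4 := ENNReal.toReal_mono (ENNReal.add_ne_top.mpr ⟨hA, ENNReal.ofReal_ne_top⟩) h2
    rwa [ENNReal.toReal_add hA ENNReal.ofReal_ne_top, ENNReal.toReal_ofReal he] at h4
  have h4 : A.toReal ≤ B.toReal := ENNReal.toReal_mono hB h1
  rw [abs_le]; constructor <;> linarith

lemma utv_right_cont {f : ℝ → ℝ} {c a b t : ℝ} (hc : 0 < c) (hb : UTVc f c a b ≠ ⊤)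
    (ht : t ∈ Ico a b) (hrt : Tendsto f (nhdsWithin t (Ioi t)) (nhds (f t))) :
    Tendsto (fun s => (UTVc f c a s).toReal) (nhdsWithin t (Ioi t))
      (nhds ((UTVc f c a t).toReal)) := by
  rw [Metric.tendsto_nhdsWithin_nhds] at hrt ⊢
  intro ε hε
  set η := min ε c / 4 with hη
  have hη0 : 0 < η := by have := lt_min hε hc; positivity
  obtain ⟨δ₁, hδ₁, hball⟩ := hrt η hη0
  refine ⟨min δ₁ (b - t), lt_min hδ₁ (by linarith [ht.2]), fun {s} hs hds => ?_⟩
  have hts : t < s := hs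
  have hsb : s ≤ b := by
    rw [Real.dist_eq, abs_of_nonneg (by linarith)] at hds
    have := lt_of_lt_of_le hds (min_le_right δ₁ (b - t))
    linarith
  have hnear : ∀ u, t < u → u ≤ s → |f u - f t| < η := by
    intro u h1 h2
    have hd : dist u t < δ₁ := by
      rw [Real.dist_eq, abs_of_nonneg (by linarith)]
      rw [Real.dist_eq, abs_of_nonneg (by linarith)] at hds
      have := lt_of_le_of_lt (by linarith : u - t ≤ s - t) (hds.trans_le (min_le_left _ _))
      exact this
    have := hball h1 hd
    rwa [Real.dist_eq] at this
  have hzero : UTVc f c t s = 0 := by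
    refine utv_zero fun u v hu huv hv => ?_
    have hec : η ≤ c / 4 := by rw [hη]; have := min_le_right ε c; linarith
    rcases eq_or_lt_of_le hu with heq | hu2
    · rcases eq_or_lt_of_le (heq ▸ huv : t ≤ v) with heq2 | hv2
      · rw [← heq, ← heq2]; linarith
      · have := (abs_lt.mp (hnear v hv2 hv)).2; rw [← heq]; linarith
    · have h1 := (abs_lt.mp (hnear u hu2 (huv.trans hv))).1
      rcases eq_or_lt_of_le huv with heq2 | hv2
      · rw [← heq2]; linarith
      · have := (abs_lt.mp (hnear v (hu2.trans hv2) hv)).2; linarith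
  have hsplit := utv_split (f := f) (a := a) hc.le hts.le hη0.le
    (fun u hu1 hu2 => by
      rcases eq_or_lt_of_le hu1 with heq | hu3
      · rw [← heq]; simp; linarith
      · exact ((abs_lt.mp (hnear u hu3 hu2)).2).le)
  rw [hzero, add_zero] at hsplit
  have hBfin : UTVc f c a s ≠ ⊤ := ne_top_of_le_ne_top hb (utv_mono f c a hsb)
  have := toReal_squeeze hBfin (utv_mono f c a hts.le) hsplit hη0.le
  rw [Real.dist_eq]
  have : |(UTVc f c a s).toReal - (UTVc f c a t).toReal| ≤ η := this
  have hηε : η < ε := by rw [hη]; have := min_le_left ε c; linarith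
  linarith [this]

lemma utv_left_cont {f : ℝ → ℝ} {c a b t : ℝ} (hc : 0 < c) (hb : UTVc f c a b ≠ ⊤)
    (ht : t ∈ Ioc a b)
    (hct : ∀ ε > 0, ∃ δ > 0, ∀ u ∈ Icc a b, |u - t| < δ → |f u - f t| < ε) :
    Tendsto (fun s => (UTVc f c a s).toReal) (nhdsWithin t (Iio t))
      (nhds ((UTVc f c a t).toReal)) := by
  rw [Metric.tendsto_nhdsWithin_nhds]
  intro ε hε
  set η := min ε c / 8 with hη
  have hη0 : 0 < η := by have := lt_min hε hc; positivity
  obtain ⟨δ₁, hδ₁, hball⟩ := hct η hη0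
  refine ⟨min δ₁ (t - a), lt_min hδ₁ (by linarith [ht.1]), fun {s} hs hds => ?_⟩
  have hst : s < t := hs
  have hsa : a ≤ s := by
    rw [Real.dist_eq, abs_of_nonpos (by linarith)] at hds
    have := lt_of_lt_of_le hds (min_le_right δ₁ (t - a))
    linarith
  have hnear : ∀ u, s ≤ u → u ≤ t → |f u - f t| < η := by
    intro u h1 h2
    refine hball u ⟨hsa.trans h1, h2.trans ht.2⟩ ?_
    have hd1 : dist s t < δ₁ := lt_of_lt_of_le hds (min_le_left _ _)
    rw [Real.dist_eq, abs_of_nonpos (by linarith)] at hd1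
    rw [abs_of_nonpos (by linarith)]
    linarith
  have hzero : UTVc f c s t = 0 := by
    refine utv_zero fun u v hu huv hv => ?_
    have hec : η ≤ c / 8 := by rw [hη]; have := min_le_right ε c; linarith
    have h1 := (abs_lt.mp (hnear u hu (huv.trans hv))).1
    have h2 := (abs_lt.mp (hnear v (hu.trans huv) hv)).2
    linarith
  have hsplit := utv_split (f := f) (a := a) hc.le hst.le (by linarith : (0:ℝ) ≤ 2*η)
    (fun u hu1 hu2 => by
      have h1 := (abs_lt.mp (hnear u hu1 hu2)).2
      have h2 := (abs_lt.mp (hnear s le_rfl hst.le)).1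
      linarith)
  rw [hzero, add_zero] at hsplit
  have hBfin : UTVc f c a t ≠ ⊤ := ne_top_of_le_ne_top hb (utv_mono f c a ht.2)
  have hsq := toReal_squeeze hBfin (utv_mono f c a hst.le) hsplit (by linarith)
  rw [Real.dist_eq, abs_sub_comm]
  have hηε : 2*η < ε := by rw [hη]; have := min_le_left ε c; linarith
  linarith [hsq, abs_le.mp hsq]

lemma utv_left_lim {f : ℝ → ℝ} {c a b t : ℝ} (hb : UTVc f c a b ≠ ⊤) (htb : t ≤ b) :
    ∃ l, Tendsto (fun s => (UTVc f c a s).toReal) (nhdsWithin t (Iio t)) (nhds l) := by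
  have hmono : MonotoneOn (fun s => (UTVc f c a s).toReal) (Iio t) := by
    intro x hx y hy hxy
    exact ENNReal.toReal_mono (ne_top_of_le_ne_top hb (utv_mono f c a ((le_of_lt hy).trans htb)))
      (utv_mono f c a hxy)
  have hbdd : BddAbove ((fun s => (UTVc f c a s).toReal) '' Iio t) := by
    refine ⟨(UTVc f c a b).toReal, fun x hx => ?_⟩
    obtain ⟨y, hy, rfl⟩ := hx
    exact ENNReal.toReal_mono hb (utv_mono f c a ((le_of_lt hy).trans htb))
  exact ⟨_, hmono.tendsto_nhdsLT hbdd⟩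

lemma dtv_eq_utv_neg (f : ℝ → ℝ) (c a b : ℝ) : DTVc f c a b = UTVc (fun x => -f x) c a b := by
  unfold DTVc UTVc
  refine iSup_congr fun n => iSup_congr fun t => iSup_congr fun _ =>
    Finset.sum_congr rfl fun i _ => ?_
  congr 1
  ring


/-- `s ↦ UTV^c(f,[a,s]) − DTV^c(f,[a,s])` is càdlàg on `[a, b]`, and each
of its points of discontinuity is a point of discontinuity of `f`. -/
theorem f0c_cadlag (a b : ℝ) (hab : a < b) (f : ℝ → ℝ)
    (hf : Cadlag f a b) (c : ℝ) (hc : 0 < c) :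
    Cadlag (fun t => (UTVc f c a t).toReal - (DTVc f c a t).toReal) a b ∧
    ∀ t ∈ Set.Icc a b, ContinuousWithinAt f (Set.Icc a b) t →
      ContinuousWithinAt (fun t => (UTVc f c a t).toReal - (DTVc f c a t).toReal)
        (Set.Icc a b) t := by
  obtain ⟨hrt, hlt⟩ := hf
  have hUfin : UTVc f c a b ≠ ⊤ := utv_fin hab.le hc hrt hlt
  have hrtn : ∀ t ∈ Ico a b, Tendsto (fun x => -f x) (nhdsWithin t (Ioi t)) (nhds (-f t)) :=
    fun t ht => (hrt t ht).neg
  have hltn : ∀ t ∈ Ioc a b, ∃ l, Tendsto (fun x => -f x) (nhdsWithin t (Iio t)) (nhds l) :=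
    fun t ht => (hlt t ht).elim fun l h => ⟨-l, h.neg⟩
  have hDfin : UTVc (fun x => -f x) c a b ≠ ⊤ := utv_fin hab.le hc hrtn hltn
  have hg : (fun t => (UTVc f c a t).toReal - (DTVc f c a t).toReal)
      = fun t => (UTVc f c a t).toReal - (UTVc (fun x => -f x) c a t).toReal := by
    funext t; rw [dtv_eq_utv_neg]
  rw [hg]
  constructor
  · constructor
    · intro t ht
      exact (utv_right_cont hc hUfin ht (hrt t ht)).sub (utv_right_cont hc hDfin ht (hrtn t ht))
    · intro t ht
      obtain ⟨l1, h1⟩ := utv_left_lim (f := f) hUfin ht.2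
      obtain ⟨l2, h2⟩ := utv_left_lim (f := fun x => -f x) hDfin ht.2
      exact ⟨l1 - l2, h1.sub h2⟩
  · intro t ht hcf
    have hct : ∀ ε > 0, ∃ δ > 0, ∀ u ∈ Icc a b, |u - t| < δ → |f u - f t| < ε := by
      intro ε hε
      obtain ⟨δ, hδ, h⟩ := Metric.continuousWithinAt_iff.mp hcf ε hε
      exact ⟨δ, hδ, fun u hu hd => by
        have := h hu (by rwa [Real.dist_eq]); rwa [Real.dist_eq] at this⟩
    have hctn : ∀ ε > 0, ∃ δ > 0, ∀ u ∈ Icc a b, |u - t| < δ → |(-f u) - (-f t)| < ε := by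
      intro ε hε
      obtain ⟨δ, hδ, h⟩ := hct ε hε
      exact ⟨δ, hδ, fun u hu hd => by
        have := h u hu hd; rwa [show -f u - -f t = f t - f u by ring, abs_sub_comm]⟩
    set g := fun s => (UTVc f c a s).toReal - (UTVc (fun x => -f x) c a s).toReal with hgdef
    have hpure : Tendsto g (pure t) (nhds (g t)) := tendsto_pure_nhds g t
    by_cases htb : t = b
    · subst htb
      have hL : Tendsto g (nhdsWithin t (Iio t)) (nhds (g t)) :=
        (utv_left_cont hc hUfin ⟨hab, le_rfl⟩ hct).sub
          (utv_left_cont hc hDfin ⟨hab, le_rfl⟩ hctn)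
      have hfil : nhdsWithin t (Icc a t) ≤ nhdsWithin t (Iio t) ⊔ pure t := by
        calc nhdsWithin t (Icc a t) ≤ nhdsWithin t (Iic t) := nhdsWithin_mono _ Icc_subset_Iic_self
          _ = nhdsWithin t (Iio t ∪ {t}) := by rw [show Iio t ∪ {t} = Iic t from by ext x; simp [le_iff_lt_or_eq]]
          _ = nhdsWithin t (Iio t) ⊔ nhdsWithin t {t} := nhdsWithin_union t (Iio t) {t}
          _ = nhdsWithin t (Iio t) ⊔ pure t := by rw [nhdsWithin_singleton]
      exact (tendsto_sup.mpr ⟨hL, hpure⟩).mono_left hfil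
    · have htb' : t < b := lt_of_le_of_ne ht.2 htb
      have hR : Tendsto g (nhdsWithin t (Ioi t)) (nhds (g t)) :=
        (utv_right_cont hc hUfin ⟨ht.1, htb'⟩ (hrt t ⟨ht.1, htb'⟩)).sub
          (utv_right_cont hc hDfin ⟨ht.1, htb'⟩ (hrtn t ⟨ht.1, htb'⟩))
      have hL : Tendsto g (nhdsWithin t (Iio t)) (nhds (g t)) := by
        rcases eq_or_lt_of_le ht.1 with hta | hta
        · have hzero : ∀ s, s ≤ a → g s = 0 := by
            intro s hs
            simp [hgdef, utv_degenerate hs]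
          have hgt : g t = 0 := hzero t hta.symm.le
          rw [hgt]
          refine Tendsto.congr' ?_ tendsto_const_nhds
          filter_upwards [self_mem_nhdsWithin] with s hs
          exact (hzero s (le_of_lt (hta ▸ hs))).symm
        · exact (utv_left_cont hc hUfin ⟨hta, ht.2⟩ hct).sub
            (utv_left_cont hc hDfin ⟨hta, ht.2⟩ hctn)
      have hfil : nhdsWithin t (Icc a b) ≤ (nhdsWithin t (Iio t) ⊔ nhdsWithin t (Ioi t)) ⊔ pure t := by
        calc nhdsWithin t (Icc a b) ≤ nhdsWithin t ((Iio t ∪ Ioi t) ∪ {t}) :=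
              nhdsWithin_mono _ (fun x _ => by
                rcases lt_trichotomy x t with h | h | h
                · exact Or.inl (Or.inl h)
                · exact Or.inr (by simp [h])
                · exact Or.inl (Or.inr h))
          _ = nhdsWithin t (Iio t ∪ Ioi t) ⊔ nhdsWithin t {t} := nhdsWithin_union _ _ _
          _ = (nhdsWithin t (Iio t) ⊔ nhdsWithin t (Ioi t)) ⊔ pure t := by
              rw [nhdsWithin_union, nhdsWithin_singleton]
      exact (tendsto_sup.mpr ⟨tendsto_sup.mpr ⟨hL, hR⟩, hpure⟩).mono_left hfil
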